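/- Every finite directed acyclic graph on n vertices admits a bijective labeling I : V → {0,...,n-1} that is a topological ordering (if u can reach v with u ≠ v then I(u) < I(v)) and such that for every k ∈ {0,...,n-2}, enc(S_I(k)) ≥ enc(S_I(k+1)), where S_I(k) is the set of labels of successors of the vertex labeled k and enc(X) = Σ_{u∈X} 2^(n-u-1). -/

import Mathlib

open scoped Classical

def enc (n : ℕ) (S : Finset ℕ) : ℕ := ∑ x ∈ S, 2 ^ (n - x - 1)

noncomputable def succFin {V : Type*} [Fintype V] (A : V → V → Prop) (w : V) : Finset V :=
  Finset.univ.filter (fun x => x ≠ w ∧ Relation.TransGen A w x)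

section Aux
variable {V : Type*} [Fintype V] (A : V → V → Prop)

lemma mem_succFin {w x : V} : x ∈ succFin A w ↔ x ≠ w ∧ Relation.TransGen A w x := by
  simp [succFin]

/-- enc of a vertex relative to a list of already-placed vertices. -/
noncomputable def encL (l : List V) (w : V) : ℕ :=
  ∑ y ∈ succFin A w, 2 ^ (l.length - 1 - l.idxOf y)

lemma encL_cons {w₀ x : V} {l : List V} (hw₀ : w₀ ∉ l)
    (hx : ∀ y ∈ succFin A x, y ∈ l) :
    encL A (w₀ :: l) x = encL A l x := by
  unfold encL
  refine Finset.sum_congr rfl fun y hy => ?_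
  have hyl := hx y hy
  have hne : w₀ ≠ y := fun h => hw₀ (h ▸ hyl)
  rw [List.idxOf_cons_ne _ hne]
  congr 1
  simp only [List.length_cons, Nat.succ_eq_add_one]
  omega

lemma succFin_mono {w w₀ : V} (hacyc : ∀ x, ¬ Relation.TransGen A x x)
    (h : w₀ ∈ succFin A w) : succFin A w₀ ⊆ succFin A w := by
  intro y hy
  rw [mem_succFin] at *
  have htr : Relation.TransGen A w y := h.2.trans hy.2
  exact ⟨fun hyw => hacyc w (hyw ▸ htr), htr⟩

lemma exists_candidate (hacyc : ∀ x, ¬ Relation.TransGen A x x) (l : List V)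
    (hl : l.length < Fintype.card V) :
    ∃ w, w ∉ l ∧ ∀ y ∈ succFin A w, y ∈ l := by
  haveI : IsTrans V (flip (Relation.TransGen A)) :=
    ⟨fun a b c h1 h2 => Relation.TransGen.trans h2 h1⟩
  haveI : IsIrrefl V (flip (Relation.TransGen A)) := ⟨fun a => hacyc a⟩
  have wf := Finite.wellFounded_of_trans_of_irrefl (flip (Relation.TransGen A))
  have hne : {x : V | x ∉ l}.Nonempty := by
    by_contra h
    have hal : ∀ x : V, x ∈ l := by
      intro x; by_contra hx; exact h ⟨x, hx⟩
    have h1 : Finset.univ ⊆ l.toFinset := fun x _ => List.mem_toFinset.2 (hal x)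
    have h2 := Finset.card_le_card h1
    have h3 := List.toFinset_card_le l
    simp only [Finset.card_univ] at h2
    omega
  obtain ⟨w, hw, hmin⟩ := wf.has_min _ hne
  refine ⟨w, hw, fun y hy => ?_⟩
  by_contra hyl
  exact hmin y hyl (mem_succFin A |>.1 hy).2

/-- Main construction by induction: list of length m whose indices will be the labels
`n-m, ..., n-1` of the final order. -/
lemma build (hacyc : ∀ x, ¬ Relation.TransGen A x x) (m : ℕ) (hm : m ≤ Fintype.card V) :
    ∃ l : List V, l.length = m ∧ l.Nodup ∧
      (∀ w ∈ l, ∀ y ∈ succFin A w, y ∈ l ∧ l.idxOf w < l.idxOf y) ∧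
      (∀ w, w ∉ l → (∀ y ∈ succFin A w, y ∈ l) →
        ∀ h ∈ l.head?, encL A l h ≤ encL A l w) ∧
      List.Chain' (fun a b => encL A l b ≤ encL A l a) l := by
  induction m with
  | zero => exact ⟨[], rfl, List.nodup_nil, by simp, by simp, List.isChain_nil⟩
  | succ m ih =>
    obtain ⟨l, hlen, hnd, htopo, hmin, hchain⟩ := ih (Nat.le_of_succ_le hm)
    have hlt : l.length < Fintype.card V := by omega
    -- candidate set
    set C : Finset V := Finset.univ.filter
      (fun w => w ∉ l ∧ ∀ y ∈ succFin A w, y ∈ l) with hC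
    have hCne : C.Nonempty := by
      obtain ⟨w, hw1, hw2⟩ := exists_candidate A hacyc l hlt
      exact ⟨w, Finset.mem_filter.2 ⟨Finset.mem_univ w, hw1, hw2⟩⟩
    obtain ⟨w₀, hw₀C, hw₀min⟩ := Finset.exists_min_image C (encL A l) hCne
    obtain ⟨-, hw₀l, hw₀succ⟩ := Finset.mem_filter.1 hw₀C
    refine ⟨w₀ :: l, by simp [hlen], List.nodup_cons.2 ⟨hw₀l, hnd⟩, ?_, ?_, ?_⟩
    · -- topo invariant
      intro w hw y hy
      rcases List.mem_cons.1 hw with h | h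
      · rw [h] at hy ⊢
        have hyl := hw₀succ y hy
        have hne : w₀ ≠ y := fun h => hw₀l (h ▸ hyl)
        constructor
        · exact List.mem_cons_of_mem _ hyl
        · rw [List.idxOf_cons_self, List.idxOf_cons_ne _ hne]
          omega
      · obtain ⟨hyl, hidx⟩ := htopo w h y hy
        have hne : w₀ ≠ y := fun h => hw₀l (h ▸ hyl)
        have hnew : w₀ ≠ w := fun h' => hw₀l (h' ▸ h)
        constructor
        · exact List.mem_cons_of_mem _ hyl
        · rw [List.idxOf_cons_ne _ hne, List.idxOf_cons_ne _ hnew]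
          omega
    · -- head minimality
      intro w hw hsucc h hh
      simp only [List.head?_cons, Option.mem_def, Option.some.injEq] at hh
      subst hh
      have hwl : w ∉ l := fun h => hw (List.mem_cons_of_mem _ h)
      by_cases hc : w₀ ∈ succFin A w
      · -- succFin w₀ ⊆ succFin w
        exact Finset.sum_le_sum_of_subset (succFin_mono A hacyc hc)
      · have hsucc' : ∀ y ∈ succFin A w, y ∈ l := by
          intro y hy
          rcases List.mem_cons.1 (hsucc y hy) with h | h
          · exact absurd (h ▸ hy) hc
          · exact h
        have hwC : w ∈ C :=
          Finset.mem_filter.2 ⟨Finset.mem_univ w, hwl, hsucc'⟩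
        rw [encL_cons A hw₀l hw₀succ, encL_cons A hw₀l hsucc']
        exact hw₀min w hwC
    · -- chain
      simp only [List.Chain'] at hchain ⊢
      rw [List.isChain_cons]
      constructor
      · intro h hh
        have hhl : h ∈ l := by
          cases l with
          | nil => simp at hh
          | cons a t => simp only [List.head?_cons, Option.mem_def, Option.some.injEq] at hh; exact hh ▸ List.mem_cons_self
        have hhsucc : ∀ y ∈ succFin A h, y ∈ l := fun y hy => (htopo h hhl y hy).1
        rw [encL_cons A hw₀l hw₀succ, encL_cons A hw₀l hhsucc]
        exact hmin w₀ hw₀l hw₀succ h (by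
          cases l with
          | nil => simp at hh
          | cons a t => exact hh)
      · -- chain on tail with new encL
        rw [List.isChain_iff_getElem] at hchain ⊢
        intro i hi
        have h1 : l.get ⟨i, by omega⟩ ∈ l := List.get_mem _ _
        have h2 : l.get ⟨i + 1, by omega⟩ ∈ l := List.get_mem _ _
        simp only [List.get_eq_getElem] at h1 h2
        rw [encL_cons A hw₀l (fun y hy => (htopo _ h1 y hy).1),
            encL_cons A hw₀l (fun y hy => (htopo _ h2 y hy).1)]
        exact hchain i hi

end Aux

theorem stmt5 {V : Type*} [Fintype V] (n : ℕ) (hn : Fintype.card V = n)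
    (A : V → V → Prop) (hacyc : ∀ x, ¬ Relation.TransGen A x x) :
    ∃ I : V ≃ Fin n,
      (∀ u v : V, u ≠ v → Relation.TransGen A u v → I u < I v) ∧
      ∀ k : ℕ, ∀ hk : k + 1 < n,
        enc n ((succFin A (I.symm ⟨k, Nat.lt_of_succ_lt hk⟩)).image (fun u => (I u : ℕ))) ≥
        enc n ((succFin A (I.symm ⟨k + 1, hk⟩)).image (fun u => (I u : ℕ))) := by
  obtain ⟨l, hlen, hnd, htopo, hmin, hchain⟩ := build A hacyc (Fintype.card V) le_rfl
  have hlen' : l.length = n := by omega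
  have hall : ∀ x : V, x ∈ l := by
    have h1 : l.toFinset = Finset.univ :=
      Finset.eq_univ_of_card _ (by rw [List.toFinset_card_of_nodup hnd, hlen])
    intro x
    rw [← List.mem_toFinset, h1]
    exact Finset.mem_univ x
  have hidx : ∀ x : V, l.idxOf x < n := fun x => hlen' ▸ List.idxOf_lt_length_iff.2 (hall x)
  refine ⟨⟨fun x => ⟨l.idxOf x, hidx x⟩, fun i => l.get ⟨i, by omega⟩,
    fun x => List.idxOf_get _, fun i => by
      ext
      simp only
      rw [List.get_idxOf hnd]⟩, ?_, ?_⟩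
  · intro u v huv htg
    have hv : v ∈ succFin A u := (mem_succFin A).2 ⟨Ne.symm huv, htg⟩
    exact (htopo u (hall u) v hv).2
  · intro k hk
    -- identify I.symm k with l.get k
    have hkey : ∀ (j : ℕ) (hj : j < n),
        enc n ((succFin A (l.get ⟨j, by omega⟩)).image (fun u => l.idxOf u)) =
        encL A l (l.get ⟨j, by omega⟩) := by
      intro j hj
      unfold enc encL
      rw [Finset.sum_image (fun x _ y _ h => by
        have hx := hidx x; have hy := hidx y
        have : l.get ⟨l.idxOf x, by omega⟩ = l.get ⟨l.idxOf y, by omega⟩ := by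
          congr 1
          exact Fin.ext h
        rwa [List.idxOf_get, List.idxOf_get] at this)]
      refine Finset.sum_congr rfl fun y _ => ?_
      congr 1
      omega
    have := (List.isChain_iff_getElem.1 hchain) k (by omega)
    simp only [Equiv.coe_fn_mk, Equiv.coe_fn_symm_mk] at *
    rw [ge_iff_le]
    calc enc n ((succFin A (l.get ⟨k+1, by omega⟩)).image (fun u => l.idxOf u))
        = encL A l (l.get ⟨k+1, by omega⟩) := hkey (k+1) (by omega)
      _ ≤ encL A l (l.get ⟨k, by omega⟩) := this
      _ = enc n ((succFin A (l.get ⟨k, by omega⟩)).image (fun u => l.idxOf u)) :=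
          (hkey k (by omega)).symm
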